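/- If G ∈ ℝ^{m×n} has rank r, and I, J are index sets of size r such that the submatrix G(I,J) is invertible, then the cross approximation is exact: G = G(:,J) · G(I,J)⁻¹ · G(I,:). -/

import Mathlib

open Matrix

/-- The rank of an arbitrary submatrix is at most the rank of the matrix. -/
lemma rank_submatrix_le_general {m n l o : Type*} [Fintype m] [Fintype n]
    [Fintype l] [Fintype o] [DecidableEq m] [DecidableEq n] (A : Matrix m n ℝ)
    (f : l → m) (g : o → n) :
    (A.submatrix f g).rank ≤ A.rank := by
  have h1 : ((1 : Matrix m m ℝ).submatrix f ⇑(Equiv.refl m)) * A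
      = A.submatrix f id := by
    rw [Matrix.one_submatrix_mul]
    congr
  have h2 : A.submatrix f id * ((1 : Matrix n n ℝ).submatrix
      ⇑(Equiv.refl n) g) = A.submatrix f g := by
    rw [Matrix.mul_submatrix_one]
    rfl
  calc (A.submatrix f g).rank
      = (((1 : Matrix m m ℝ).submatrix f ⇑(Equiv.refl m)) * A
        * ((1 : Matrix n n ℝ).submatrix ⇑(Equiv.refl n) g)).rank := by
        rw [h1, h2]
    _ ≤ (((1 : Matrix m m ℝ).submatrix f ⇑(Equiv.refl m)) * A).rank :=
        Matrix.rank_mul_le_left _ _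
    _ ≤ A.rank := Matrix.rank_mul_le_right _ _

/-- Exactness of cross approximation: if `G` has rank `r` and `I`, `J` are index sets of
size `r` such that the intersection submatrix `G(I,J)` is invertible, then
`G = G(:,J) · G(I,J)⁻¹ · G(I,:)`. -/
theorem cross_approximation_exact (m n r : ℕ) (G : Matrix (Fin m) (Fin n) ℝ)
    (hrank : G.rank = r)
    (isel : Fin r → Fin m) (hi : Function.Injective isel)
    (jsel : Fin r → Fin n) (hj : Function.Injective jsel)
    (hinv : IsUnit (G.submatrix isel jsel)) :
    G = G.submatrix id jsel * (G.submatrix isel jsel)⁻¹ * G.submatrix isel id := by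
  set A := G.submatrix isel jsel with hA
  obtain ⟨iA⟩ := hinv.nonempty_invertible
  have hdetA : A.det ≠ 0 := by
    intro h
    exact (isUnit_iff_ne_zero.mp (hinv.map (Matrix.detMonoidHom))) h
  ext i k
  -- the (r+1)×(r+1) submatrix
  let rsel : Fin r ⊕ Unit → Fin m := Sum.elim isel (fun _ => i)
  let csel : Fin r ⊕ Unit → Fin n := Sum.elim jsel (fun _ => k)
  let B : Matrix (Fin r) Unit ℝ := fun a _ => G (isel a) k
  let C : Matrix Unit (Fin r) ℝ := fun _ b => G i (jsel b)
  let D : Matrix Unit Unit ℝ := fun _ _ => G i k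
  have hM : G.submatrix rsel csel = Matrix.fromBlocks A B C D := by
    ext a b
    rcases a with a | a <;> rcases b with b | b <;> rfl
  -- its rank is at most r, hence its determinant vanishes
  have hrk : (G.submatrix rsel csel).rank ≤ r := by
    calc (G.submatrix rsel csel).rank ≤ G.rank := by
          exact rank_submatrix_le_general G rsel csel
      _ = r := hrank
  have hdet0 : (G.submatrix rsel csel).det = 0 := by
    by_contra hd
    have hu : IsUnit (G.submatrix rsel csel) :=
      (Matrix.isUnit_iff_isUnit_det _).mpr (isUnit_iff_ne_zero.mpr hd)
    have := Matrix.rank_of_isUnit _ hu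
    rw [this] at hrk
    simp [Fintype.card_sum] at hrk
  rw [hM, Matrix.det_fromBlocks₁₁] at hdet0
  have hschur : D - C * ⅟A * B = 0 := by
    have : (D - C * ⅟A * B).det = 0 := by
      rcases mul_eq_zero.mp hdet0 with h | h
      · exact absurd h hdetA
      · exact h
    rw [Matrix.det_unique] at this
    ext a b
    simp only [Matrix.zero_apply]
    convert this
  have hentry : G i k = (C * ⅟A * B) () () := by
    have := congrFun (congrFun hschur ()) ()
    simp only [Matrix.sub_apply, Matrix.zero_apply, sub_eq_zero] at this
    exact this
  have hinvA : (⅟A : Matrix (Fin r) (Fin r) ℝ) = A⁻¹ := Matrix.invOf_eq_nonsing_inv A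
  rw [hentry, hinvA]
  simp only [Matrix.mul_apply, Matrix.submatrix_apply, id_eq, C, B]
  rfl
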